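/- Let E = EuclideanSpace ℝ (Fin 3), let h : E → ℝ be continuously differentiable, let λ : E → ℝ be continuous with λ(y) ≥ λ₀ for some λ₀ > 0 and all y, and define the guidance field v(y) = λ(y) • ∇h(y). Let k : E → E be continuous and γ > 0, and suppose ⟪v(y), k(y)⟫ ≥ -γ·h(y) for all y ∈ E. If y : ℝ → E is differentiable with y'(t) = k(y(t)) for all t ≥ 0 and h(y(0)) ≥ 0, then h(y(t)) ≥ 0 for all t ≥ 0 (Proposition 1, guidance-field form: enforcing the guidance-field constraint v·k ≥ -γh renders the 0-superlevel set of h forward invariant for the single integrator). -/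

import Mathlib

open scoped RealInnerProductSpace

/-- Proposition 1 (guidance-field form): with guidance field `v = λ • ∇h`, `λ ≥ lam₀ > 0`,
the constraint `⟪v(y), k(y)⟫ ≥ -γ h(y)` renders `{h ≥ 0}` forward invariant for `ẏ = k(y)`. -/
theorem forward_invariance_first_order_guidance
    (h : EuclideanSpace ℝ (Fin 3) → ℝ) (hh : ContDiff ℝ 1 h)
    (lam : EuclideanSpace ℝ (Fin 3) → ℝ) (hlam : Continuous lam)
    (lam₀ : ℝ) (hlam₀ : 0 < lam₀) (hlam_lb : ∀ y, lam₀ ≤ lam y)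
    (v : EuclideanSpace ℝ (Fin 3) → EuclideanSpace ℝ (Fin 3))
    (hv : ∀ y, v y = lam y • gradient h y)
    (k : EuclideanSpace ℝ (Fin 3) → EuclideanSpace ℝ (Fin 3)) (hk : Continuous k)
    (γ : ℝ) (hγ : 0 < γ)
    (hcbf : ∀ y, ⟪v y, k y⟫ ≥ -γ * h y)
    (y : ℝ → EuclideanSpace ℝ (Fin 3)) (hy : Differentiable ℝ y)
    (hode : ∀ t, 0 ≤ t → deriv y t = k (y t))
    (h0 : h (y 0) ≥ 0) :
    ∀ t, 0 ≤ t → h (y t) ≥ 0 := by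
  set φ : ℝ → ℝ := fun t => h (y t) with hφ
  have hφcont : Continuous φ := (hh.continuous).comp hy.continuous
  -- derivative of φ
  have hder : ∀ s : ℝ, 0 ≤ s → HasDerivAt φ (⟪gradient h (y s), k (y s)⟫) s := by
    intro s hs
    have hyd : HasDerivAt y (k (y s)) s := by
      have := (hy s).hasDerivAt
      rwa [hode s hs] at this
    have hgd : HasGradientAt h (gradient h (y s)) (y s) :=
      (hh.differentiable one_ne_zero (y s)).hasGradientAt
    have := hgd.hasFDerivAt.comp_hasDerivAt s hyd
    exact this
  -- key positivity: where φ < 0 the derivative is positive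
  have hpos : ∀ s : ℝ, 0 ≤ s → φ s < 0 → 0 < ⟪gradient h (y s), k (y s)⟫ := by
    intro s hs hneg
    have h1 := hcbf (y s)
    rw [hv (y s), real_inner_smul_left] at h1
    have hl : 0 < lam (y s) := lt_of_lt_of_le hlam₀ (hlam_lb (y s))
    nlinarith
  intro t ht
  by_contra hneg
  push_neg at hneg
  have hneg' : φ t < 0 := hneg
  have ht0 : (0:ℝ) < t := by
    rcases lt_or_eq_of_le ht with h' | h'
    · exact h'
    · exfalso; rw [← h'] at hneg'; exact absurd h0 (not_le.mpr hneg')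
  set S : Set ℝ := Set.Icc 0 t ∩ {s | 0 ≤ φ s} with hS
  have hSne : S.Nonempty := ⟨0, ⟨le_rfl, le_of_lt ht0⟩, h0⟩
  have hSbdd : BddAbove S := BddAbove.mono Set.inter_subset_left (bddAbove_Icc)
  have hSclosed : IsClosed S :=
    (isClosed_Icc).inter (isClosed_le continuous_const hφcont)
  set t₀ := sSup S with ht₀
  have ht₀S : t₀ ∈ S := hSclosed.csSup_mem hSne hSbdd
  obtain ⟨⟨ht₀0, ht₀t⟩, ht₀φ⟩ := ht₀S
  have ht₀lt : t₀ < t := by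
    rcases lt_or_eq_of_le ht₀t with h' | h'
    · exact h'
    · exfalso; rw [h'] at ht₀φ; exact absurd ht₀φ (not_le.mpr hneg')
  -- φ is strictly monotone on [t₀, t]
  have hmono : StrictMonoOn φ (Set.Icc t₀ t) := by
    apply strictMonoOn_of_deriv_pos (convex_Icc t₀ t) (hφcont.continuousOn)
    intro s hs
    rw [interior_Icc] at hs
    have hs0 : 0 ≤ s := le_of_lt (lt_of_le_of_lt ht₀0 hs.1)
    have hφs : φ s < 0 := by
      by_contra hc
      push_neg at hc
      have hsS : s ∈ S := ⟨⟨hs0, le_of_lt hs.2⟩, hc⟩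
      exact absurd (le_csSup hSbdd hsS) (not_le.mpr hs.1)
    rw [(hder s hs0).deriv]
    exact hpos s hs0 hφs
  have := hmono (Set.left_mem_Icc.mpr (le_of_lt ht₀lt))
      (Set.right_mem_Icc.mpr (le_of_lt ht₀lt)) ht₀lt
  have h2 : (0:ℝ) ≤ φ t₀ := ht₀φ
  linarith
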